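/- If R is a left perfect ring and M is a left R-module that is Bézout (every finitely generated submodule is cyclic), then M is noetherian and cyclic. -/

import Mathlib

/-- A ring `R` is left perfect if `R/J(R)` is semisimple (as a left `R`-module,
equivalently as a ring) and the Jacobson radical `J(R)` is left T-nilpotent. -/
def IsLeftPerfectRing (R : Type*) [Ring R] : Prop :=
  IsSemisimpleModule R (R ⧸ Ideal.jacobson (⊥ : Ideal R)) ∧
    ∀ f : ℕ → R, (∀ n, f n ∈ Ideal.jacobson (⊥ : Ideal R)) →
      ∃ n : ℕ, ((List.range (n + 1)).map f).prod = 0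

open Submodule

section LatticeLemmas

variable {α : Type*} [CompleteLattice α] [IsModularLattice α] [DecidableEq α]

/-- Steinitz-type exchange: if an atom `a` lies below `b ⊔ sup S` (where `S` is a finite
set of atoms-or-bottoms) but not below `b`, then some element of `S` can be replaced by `a`. -/
lemma exchange_aux {a : α} (ha : IsAtom a) :
    ∀ S : Finset α, (∀ x ∈ S, IsAtom x ∨ x = ⊥) → ∀ b : α, ¬ a ≤ b → a ≤ b ⊔ S.sup id →
      ∃ T ∈ S, b ⊔ S.sup id ≤ (b ⊔ a) ⊔ (S.erase T).sup id := by
  intro S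
  induction S using Finset.induction_on with
  | empty =>
      intro _ b hab h
      simp only [Finset.sup_empty, sup_bot_eq] at h
      exact absurd h hab
  | @insert T S' hT ih =>
      intro hS b hab h
      have hsup : (insert T S').sup id = T ⊔ S'.sup id := by
        rw [Finset.sup_insert]; rfl
      by_cases hc : a ≤ b ⊔ S'.sup id
      · obtain ⟨T₀, hT₀, hle⟩ := ih (fun x hx => hS x (Finset.mem_insert_of_mem hx)) b hab hc
        refine ⟨T₀, Finset.mem_insert_of_mem hT₀, ?_⟩
        have hTmem : T ∈ (insert T S').erase T₀ := by
          refine Finset.mem_erase.mpr ⟨?_, Finset.mem_insert_self _ _⟩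
          rintro rfl; exact hT hT₀
        have hsub : S'.erase T₀ ⊆ (insert T S').erase T₀ :=
          Finset.erase_subset_erase _ (Finset.subset_insert _ _)
        have h1 : T ≤ ((insert T S').erase T₀).sup id := Finset.le_sup (f := id) hTmem
        have h2 : (S'.erase T₀).sup id ≤ ((insert T S').erase T₀).sup id :=
          Finset.sup_mono hsub
        rw [hsup]
        calc b ⊔ (T ⊔ S'.sup id) = (b ⊔ S'.sup id) ⊔ T := by
              rw [sup_comm T, ← sup_assoc]
          _ ≤ ((b ⊔ a) ⊔ (S'.erase T₀).sup id) ⊔ T := sup_le_sup_right hle _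
          _ ≤ (b ⊔ a) ⊔ ((insert T S').erase T₀).sup id := by
              refine sup_le (sup_le_sup_left h2 _) (le_trans h1 le_sup_right)
      · set F := b ⊔ S'.sup id with hF
        have hFT : a ≤ F ⊔ T := by
          rw [hsup] at h
          calc a ≤ b ⊔ (T ⊔ S'.sup id) := h
            _ = F ⊔ T := by rw [hF, sup_comm T, ← sup_assoc]
        have hTatom : IsAtom T := by
          rcases hS T (Finset.mem_insert_self _ _) with h1 | h2
          · exact h1
          · exfalso; rw [h2, sup_bot_eq] at hFT; exact hc hFT
        have hTle : T ≤ F ⊔ a := by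
          rcases hTatom.le_iff.mp (inf_le_left : T ⊓ (F ⊔ a) ≤ T) with hy | hy
          · exfalso
            apply hc
            have key : (F ⊔ T) ⊓ (F ⊔ a) = F := by
              rw [sup_inf_assoc_of_le T (le_sup_left : F ≤ F ⊔ a), hy, sup_bot_eq]
            calc a ≤ (F ⊔ T) ⊓ (F ⊔ a) := le_inf hFT le_sup_right
              _ = F := key
          · calc T = T ⊓ (F ⊔ a) := hy.symm
              _ ≤ F ⊔ a := inf_le_right
        refine ⟨T, Finset.mem_insert_self _ _, ?_⟩
        rw [Finset.erase_insert hT, hsup]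
        have hb' : b ≤ (b ⊔ a) ⊔ S'.sup id := le_trans (le_sup_left : b ≤ b ⊔ a) le_sup_left
        have hS'le : S'.sup id ≤ (b ⊔ a) ⊔ S'.sup id := le_sup_right
        have hT' : T ≤ (b ⊔ a) ⊔ S'.sup id := by
          refine le_trans hTle (sup_le (sup_le hb' hS'le) ?_)
          exact le_trans (le_sup_right : a ≤ b ⊔ a) le_sup_left
        exact sup_le hb' (sup_le hT' hS'le)

/-- In an atomistic modular complete lattice, a strictly increasing chain lying below
`b ⊔ sup S`, with all members above `b`, where `S` is a finite set of atoms-or-bottoms,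
has length at most `S.card`. -/
lemma chain_bound [IsAtomistic α] :
    ∀ (k : ℕ) (S : Finset α), (∀ x ∈ S, IsAtom x ∨ x = ⊥) →
      ∀ (c : Fin (k + 1) → α) (b : α), b ≤ c 0 → StrictMono c →
        c (Fin.last k) ≤ b ⊔ S.sup id → k ≤ S.card := by
  intro k
  induction k with
  | zero => intro S _ _ _ _ _ _; exact Nat.zero_le _
  | succ k ih =>
      intro S hS c b hb hmono htop
      have h01 : c 0 < c 1 := by
        apply hmono
        simp [Fin.lt_def]
      obtain ⟨a, ha, ha1, ha0⟩ : ∃ a, IsAtom a ∧ a ≤ c 1 ∧ ¬ a ≤ c 0 := by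
        by_contra hcon
        push_neg at hcon
        have h1 : sSup {a : α | IsAtom a ∧ a ≤ c 1} ≤ c 0 :=
          sSup_le fun a h => hcon a h.1 h.2
        rw [sSup_atoms_le_eq] at h1
        exact absurd h1 h01.not_ge
      have hca : a ≤ b ⊔ S.sup id :=
        le_trans (le_trans ha1 (hmono.monotone (Fin.le_last 1))) htop
      have hab : ¬ a ≤ b := fun h => ha0 (le_trans h hb)
      obtain ⟨T, hTS, hle⟩ := exchange_aux ha S hS b hab hca
      have hcard : (S.erase T).card = S.card - 1 := Finset.card_erase_of_mem hTS
      have hpos : 1 ≤ S.card := Finset.card_pos.mpr ⟨T, hTS⟩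
      have hkey : k ≤ (S.erase T).card := by
        refine ih (S.erase T) (fun x hx => hS x (Finset.mem_of_mem_erase hx))
          (fun i => c i.succ) (c 0 ⊔ a) ?_ ?_ ?_
        · show c 0 ⊔ a ≤ c ((0 : Fin (k + 1)).succ)
          have h0 : ((0 : Fin (k + 1)).succ) = 1 := Fin.succ_zero_eq_one
          rw [h0]
          exact sup_le h01.le ha1
        · exact hmono.comp fun i j hij => Fin.succ_lt_succ_iff.mpr hij
        · have hlast : (Fin.last k).succ = Fin.last (k + 1) := Fin.succ_last k
          show c (Fin.last k).succ ≤ _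
          rw [hlast]
          calc c (Fin.last (k + 1)) ≤ b ⊔ S.sup id := htop
            _ ≤ (b ⊔ a) ⊔ (S.erase T).sup id := hle
            _ ≤ (c 0 ⊔ a) ⊔ (S.erase T).sup id :=
              sup_le_sup_right (sup_le_sup_right hb _) _
      omega

end LatticeLemmas

section RingLemmas

variable {R : Type*} [Ring R]

/-- The Jacobson radical is a two-sided ideal. -/
lemma jac_mul_right {a : R} (ha : a ∈ Ideal.jacobson (⊥ : Ideal R)) (s : R) :
    a * s ∈ Ideal.jacobson (⊥ : Ideal R) := by
  exact Ideal.mul_mem_right s _ ha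

variable {M : Type*} [AddCommGroup M] [Module R M]

/-- In a Bézout module, every element of `J • ⊤` can be written as a single `c • w`
with `c` in the Jacobson radical. -/
lemma collapse_smul
    (hbez : ∀ N : Submodule R M, N.FG → ∃ x : M, N = Submodule.span R ({x} : Set M))
    {z : M} (hz : z ∈ (Ideal.jacobson (⊥ : Ideal R) • ⊤ : Submodule R M)) :
    ∃ c w, c ∈ Ideal.jacobson (⊥ : Ideal R) ∧ z = c • w := by
  refine Submodule.smul_induction_on hz (fun r hr n _ => ⟨r, n, hr, rfl⟩) ?_
  rintro x y ⟨c₁, w₁, hc₁, rfl⟩ ⟨c₂, w₂, hc₂, rfl⟩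
  obtain ⟨w, hw⟩ := hbez (span R {w₁, w₂}) (fg_span (Set.toFinite _))
  have h1 : w₁ ∈ span R ({w} : Set M) := by
    rw [← hw]; exact subset_span (by simp)
  have h2 : w₂ ∈ span R ({w} : Set M) := by
    rw [← hw]; exact subset_span (by simp)
  obtain ⟨s₁, hs₁⟩ := mem_span_singleton.mp h1
  obtain ⟨s₂, hs₂⟩ := mem_span_singleton.mp h2
  refine ⟨c₁ * s₁ + c₂ * s₂, w, add_mem (jac_mul_right hc₁ s₁) (jac_mul_right hc₂ s₂), ?_⟩
  rw [add_smul, mul_smul, mul_smul, hs₁, hs₂]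

/-- Nakayama-type lemma for T-nilpotent radical in Bézout modules. -/
lemma nakayama_bezout
    (hT : ∀ f : ℕ → R, (∀ n, f n ∈ Ideal.jacobson (⊥ : Ideal R)) →
      ∃ n : ℕ, ((List.range (n + 1)).map f).prod = 0)
    (hbez : ∀ N : Submodule R M, N.FG → ∃ x : M, N = Submodule.span R ({x} : Set M))
    {x : M}
    (hx : span R ({x} : Set M) ⊔ (Ideal.jacobson (⊥ : Ideal R) • ⊤ : Submodule R M) = ⊤) :
    span R ({x} : Set M) = ⊤ := by
  set J := Ideal.jacobson (⊥ : Ideal R) with hJ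
  rw [eq_top_iff]
  intro m _
  have step : ∀ y : M, ∃ p : R × R × M, p.2.1 ∈ J ∧ y = p.1 • x + p.2.1 • p.2.2 := by
    intro y
    have hy : y ∈ span R ({x} : Set M) ⊔ (J • ⊤ : Submodule R M) := by rw [hx]; trivial
    obtain ⟨u, hu, z, hz, rfl⟩ := mem_sup.mp hy
    obtain ⟨r, rfl⟩ := mem_span_singleton.mp hu
    obtain ⟨c, w, hc, rfl⟩ := collapse_smul hbez hz
    exact ⟨(r, c, w), hc, rfl⟩
  choose g hg1 hg2 using step
  let Y : ℕ → M := fun n => Nat.rec m (fun _ y => (g y).2.2) n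
  have hYs : ∀ n, Y (n + 1) = (g (Y n)).2.2 := fun n => rfl
  let C : ℕ → R := fun n => (g (Y n)).2.1
  have key : ∀ n, m - (((List.range (n + 1)).map C).prod) • Y (n + 1) ∈ span R ({x} : Set M) := by
    intro n
    induction n with
    | zero =>
        have h0 : m = (g m).1 • x + C 0 • Y (0 + 1) := hg2 m
        have h1 : m - C 0 • Y (0 + 1) = (g m).1 • x := sub_eq_iff_eq_add.mpr h0
        have h2 : ((List.range (0 + 1)).map C).prod = C 0 := by simp [List.range_succ]
        rw [h2, h1]
        exact smul_mem _ _ (mem_span_singleton_self x)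
    | succ n ih =>
        have hprod : ((List.range (n + 2)).map C).prod
            = ((List.range (n + 1)).map C).prod * C (n + 1) := by
          rw [List.range_succ, List.map_append, List.prod_append]
          simp
        set P := ((List.range (n + 1)).map C).prod with hP
        set r' := (g (Y (n + 1))).1 with hr'
        have hYn : Y (n + 1) = r' • x + C (n + 1) • Y (n + 2) := hg2 (Y (n + 1))
        have h2 : P • Y (n + 1) = (P * r') • x + (P * C (n + 1)) • Y (n + 2) := by
          rw [hYn, smul_add, mul_smul, mul_smul]
        have hexp : m - (P * C (n + 1)) • Y (n + 2)
            = (m - P • Y (n + 1)) + (P * r') • x := by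
          rw [h2]
          abel
        rw [hprod, hexp]
        exact add_mem ih (smul_mem _ _ (mem_span_singleton_self x))
  obtain ⟨n, hn⟩ := hT C (fun n => hg1 (Y n))
  have hfin := key n
  rw [hn, zero_smul, sub_zero] at hfin
  exact hfin

/-- The image of an atom (in the submodule lattice) under a linear map is an atom or bottom. -/
lemma isAtom_map_or_bot {N : Type*} [AddCommGroup N] [Module R N] (φ : M →ₗ[R] N)
    {S : Submodule R M} (hS : IsAtom S) :
    IsAtom (Submodule.map φ S) ∨ Submodule.map φ S = ⊥ := by
  by_cases hb : Submodule.map φ S = ⊥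
  · exact Or.inr hb
  · left
    refine ⟨hb, fun X hX => ?_⟩
    rcases hS.le_iff.mp (inf_le_left : S ⊓ Submodule.comap φ X ≤ S) with hy | hy
    · rw [eq_bot_iff]
      intro v hv
      obtain ⟨s, hs, rfl⟩ := Submodule.mem_map.mp (hX.le hv)
      have : s ∈ S ⊓ Submodule.comap φ X := ⟨hs, hv⟩
      rw [hy] at this
      simp only [Submodule.mem_bot] at this
      rw [this, map_zero]
      exact zero_mem _
    · exfalso
      have : S ≤ Submodule.comap φ X := by rw [← hy]; exact inf_le_right
      exact absurd (Submodule.map_le_iff_le_comap.mpr this) hX.not_ge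

end RingLemmas

section Main

variable {R M : Type*} [Ring R] [AddCommGroup M] [Module R M]

/-- A Bézout module over a left perfect ring is cyclic. -/
theorem bezout_cyclic (hR : IsLeftPerfectRing R)
    (hbez : ∀ N : Submodule R M, N.FG → ∃ x : M, N = Submodule.span R ({x} : Set M)) :
    ∃ x : M, Submodule.span R ({x} : Set M) = ⊤ := by
  classical
  haveI : DecidableEq (Submodule R (M ⧸ (Ideal.jacobson (⊥ : Ideal R) • ⊤ : Submodule R M))) := Classical.decEq _
  set J := Ideal.jacobson (⊥ : Ideal R) with hJ
  set JM : Submodule R M := J • ⊤ with hJM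
  -- The quotient Q = M / JM
  -- Bézout property for Q
  have hbezQ : ∀ U : Submodule R (M ⧸ JM), U.FG → ∃ q, U = span R ({q} : Set (M ⧸ JM)) := by
    intro U hU
    obtain ⟨t, ht⟩ := hU
    choose g hg using fun q : M ⧸ JM => JM.mkQ_surjective q
    obtain ⟨w, hw⟩ := hbez (span R (g '' ↑t)) (fg_span ((t.finite_toSet).image g))
    refine ⟨JM.mkQ w, ?_⟩
    have hmap : Submodule.map JM.mkQ (span R (g '' ↑t)) = U := by
      rw [Submodule.map_span, Set.image_image]
      have : (fun x => JM.mkQ (g x)) '' ↑t = ↑t := by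
        have : (fun x : M ⧸ JM => JM.mkQ (g x)) = id := funext fun q => hg q
        rw [this, Set.image_id]
      rw [this, ht]
    rw [← hmap, hw, Submodule.map_span, Set.image_singleton]
  -- linear maps from R/J hitting cyclic submodules of Q
  have hker : ∀ q : M ⧸ JM, J ≤ LinearMap.ker (LinearMap.toSpanSingleton R (M ⧸ JM) q) := by
    intro q a ha
    obtain ⟨mq, rfl⟩ := JM.mkQ_surjective q
    rw [LinearMap.mem_ker, LinearMap.toSpanSingleton_apply, ← map_smul,
      Submodule.mkQ_apply, Submodule.Quotient.mk_eq_zero]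
    exact Submodule.smul_mem_smul ha trivial
  let φ : (M ⧸ JM) → (R ⧸ J) →ₗ[R] (M ⧸ JM) := fun q =>
    Submodule.liftQ J (LinearMap.toSpanSingleton R (M ⧸ JM) q) (hker q)
  have hrange : ∀ q, LinearMap.range (φ q) = span R ({q} : Set (M ⧸ JM)) := by
    intro q
    show LinearMap.range (Submodule.liftQ _ _ _) = _
    rw [Submodule.range_liftQ]
    exact (LinearMap.span_singleton_eq_range R (M ⧸ JM) q).symm
  haveI hsemiP : IsSemisimpleModule R (R ⧸ J) := hR.1
  -- Q is semisimple
  haveI hQss : IsSemisimpleModule R (M ⧸ JM) := by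
    refine isSemisimpleModule_of_isSemisimpleModule_submodule'
      (p := fun q : M ⧸ JM => LinearMap.range (φ q)) (fun q => IsSemisimpleModule.range _) ?_
    rw [eq_top_iff]
    intro q _
    have hq : q ∈ LinearMap.range (φ q) := by
      rw [hrange]; exact mem_span_singleton_self q
    exact Submodule.mem_iSup_of_mem q hq
  haveI : Module.Finite R (R ⧸ J) := inferInstance
  haveI : IsNoetherian R (R ⧸ J) := inferInstance
  obtain ⟨s₀, hs₀ind, hs₀sup, hs₀simple⟩ :=
    IsSemisimpleModule.exists_sSupIndep_sSup_simples_eq_top R (R ⧸ J)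
  have hs₀fin : s₀.Finite := WellFoundedGT.finite_of_sSupIndep hs₀ind
  set S₀ := hs₀fin.toFinset with hS₀
  set L := S₀.card with hL
  haveI : IsAtomistic (Submodule R (M ⧸ JM)) :=
    complementedLattice_iff_isAtomistic.mp inferInstance
  obtain ⟨s, hsind, hssup, hssimple⟩ :=
    IsSemisimpleModule.exists_sSupIndep_sSup_simples_eq_top R (M ⧸ JM)
  -- every simple submodule of Q is a cyclic (hence FG) submodule
  have hsimple_fg : ∀ N : Submodule R (M ⧸ JM), IsSimpleModule R N → N.FG := by
    intro N hN
    haveI := hN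
    haveI : Nontrivial N := IsSimpleModule.nontrivial R N
    obtain ⟨v, hv⟩ := exists_ne (0 : N)
    have hvQ : (v : M ⧸ JM) ≠ 0 := fun h => hv (Subtype.coe_injective (by simpa using h))
    have hle : span R ({(v : M ⧸ JM)} : Set (M ⧸ JM)) ≤ N := by
      rw [span_le, Set.singleton_subset_iff]; exact v.2
    have hatomN : IsAtom N := isSimpleModule_iff_isAtom.mp hN
    rcases hatomN.le_iff.mp hle with hbot | heq
    · exfalso
      apply hvQ
      have : (v : M ⧸ JM) ∈ span R ({(v : M ⧸ JM)} : Set (M ⧸ JM)) := mem_span_singleton_self _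
      rw [hbot] at this
      simpa using this
    · rw [← heq]; exact fg_span_singleton _
  have hsfin : s.Finite := by
    by_contra hinf
    have hinf' : s.Infinite := hinf
    let e : ℕ ↪ s := hinf'.natEmbedding _
    let E : ℕ → Submodule R (M ⧸ JM) := fun n => (e n : Submodule R (M ⧸ JM))
    have hEinj : Function.Injective E := fun i j h => e.injective (Subtype.coe_injective h)
    have hEmem : ∀ n, E n ∈ s := fun n => (e n).2
    have hEatom : ∀ n, IsAtom (E n) := fun n =>
      isSimpleModule_iff_isAtom.mp (hssimple _ (hEmem n))
    let c : Fin (L + 2) → Submodule R (M ⧸ JM) := fun i => (Finset.range (i : ℕ)).sup E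
    have hcmono : StrictMono c := by
      intro i j hij
      have hle : c i ≤ c j :=
        Finset.sup_mono (Finset.range_subset_range.mpr (le_of_lt hij))
      refine lt_of_le_of_ne hle ?_
      intro heq
      have hEi : E (i : ℕ) ≤ c j := Finset.le_sup (Finset.mem_range.mpr hij)
      rw [← heq] at hEi
      have hdisj : Disjoint (E (i : ℕ)) (sSup (s \ {E (i : ℕ)})) := hsind (hEmem _)
      have hcle : c i ≤ sSup (s \ {E (i : ℕ)}) := by
        refine Finset.sup_le fun j hj => le_sSup ⟨hEmem j, ?_⟩
        intro hEq
        have : j = (i : ℕ) := hEinj hEq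
        rw [this] at hj
        exact absurd (Finset.mem_range.mp hj) (lt_irrefl _)
      have : E (i : ℕ) ≤ ⊥ := le_trans (le_inf le_rfl (le_trans hEi hcle)) hdisj.le_bot
      exact (hEatom (i : ℕ)).1 (le_bot_iff.mp this)
    have hUfg : (c (Fin.last (L + 1))).FG := by
      refine Finset.sup_induction fg_bot (fun a ha b hb => Submodule.FG.sup ha hb) ?_
      intro i _
      exact hsimple_fg _ (hssimple _ (hEmem i))
    obtain ⟨q, hq⟩ := hbezQ _ hUfg
    set T : Finset (Submodule R (M ⧸ JM)) := S₀.image (fun W => Submodule.map (φ q) W) with hT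
    have hTatoms : ∀ x ∈ T, IsAtom x ∨ x = ⊥ := by
      intro x hx
      obtain ⟨W, hW, rfl⟩ := Finset.mem_image.mp hx
      have hWsimple : IsSimpleModule R W := hs₀simple W (hs₀fin.mem_toFinset.mp hW)
      exact isAtom_map_or_bot (φ q) (isSimpleModule_iff_isAtom.mp hWsimple)
    have htop : c (Fin.last (L + 1)) ≤ ⊥ ⊔ T.sup id := by
      rw [bot_sup_eq, hq]
      have h1 : span R ({q} : Set (M ⧸ JM)) = LinearMap.range (φ q) := (hrange q).symm
      rw [h1, LinearMap.range_eq_map]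
      have h2 : (⊤ : Submodule R (R ⧸ J)) = sSup s₀ := hs₀sup.symm
      rw [h2, sSup_eq_iSup', Submodule.map_iSup]
      refine iSup_le fun W => ?_
      refine Finset.le_sup (f := id) ?_
      exact Finset.mem_image.mpr ⟨W, hs₀fin.mem_toFinset.mpr W.2, rfl⟩
    have hbound : L + 1 ≤ T.card :=
      chain_bound (L + 1) T hTatoms c ⊥ bot_le hcmono htop
    have hTcard : T.card ≤ L := le_trans Finset.card_image_le le_rfl
    omega
  -- s finite: Q is finitely generated, hence cyclic
  have htopfg : (⊤ : Submodule R (M ⧸ JM)).FG := by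
    rw [← hssup, ← Set.Finite.coe_toFinset hsfin, ← Finset.sup_id_eq_sSup]
    refine Finset.sup_induction fg_bot (fun a ha b hb => Submodule.FG.sup ha hb) ?_
    intro N hN
    exact hsimple_fg N (hssimple N (hsfin.mem_toFinset.mp hN))
  obtain ⟨q, hq⟩ := hbezQ ⊤ htopfg
  obtain ⟨x, hx⟩ := JM.mkQ_surjective q
  have hxtop : span R ({x} : Set M) ⊔ JM = ⊤ := by
    have h1 : Submodule.map JM.mkQ (span R ({x} : Set M)) = ⊤ := by
      rw [Submodule.map_span, Set.image_singleton, hx, ← hq]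
    have h2 := congrArg (Submodule.comap JM.mkQ) h1
    rwa [Submodule.comap_map_eq, Submodule.comap_top, Submodule.ker_mkQ] at h2
  exact ⟨x, nakayama_bezout hR.2 hbez hxtop⟩

end Main

/-- If `R` is a left perfect ring and `M` is a Bézout left `R`-module (every finitely
generated submodule is cyclic), then `M` is noetherian and cyclic. -/
theorem stmt12 {R M : Type*} [Ring R] [AddCommGroup M] [Module R M]
    (hR : IsLeftPerfectRing R)
    (hbez : ∀ N : Submodule R M, N.FG → ∃ x : M, N = Submodule.span R ({x} : Set M)) :
    IsNoetherian R M ∧ ∃ x : M, Submodule.span R ({x} : Set M) = ⊤ := by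
  constructor
  · rw [isNoetherian_def]
    intro N
    have hbezN : ∀ P : Submodule R N, P.FG → ∃ x : N, P = Submodule.span R ({x} : Set N) := by
      intro P hP
      obtain ⟨y, hy⟩ := hbez (Submodule.map N.subtype P) (hP.map _)
      have hyN : y ∈ N := by
        have hy' : y ∈ Submodule.map N.subtype P := by
          rw [hy]; exact Submodule.mem_span_singleton_self y
        exact Submodule.map_subtype_le N P hy'
      refine ⟨⟨y, hyN⟩, ?_⟩
      apply Submodule.map_injective_of_injective N.injective_subtype
      rw [hy, Submodule.map_span, Set.image_singleton]
      rfl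
    obtain ⟨x, hx⟩ := bezout_cyclic hR hbezN
    have : N = Submodule.span R ({(x : M)} : Set M) := by
      have h1 : Submodule.map N.subtype (⊤ : Submodule R N) = N := by
        rw [Submodule.map_top, Submodule.range_subtype]
      have h2 : Submodule.map N.subtype (Submodule.span R ({x} : Set N))
          = Submodule.span R ({(x : M)} : Set M) := by
        rw [Submodule.map_span, Set.image_singleton]; rfl
      calc N = Submodule.map N.subtype ⊤ := h1.symm
        _ = Submodule.map N.subtype (Submodule.span R ({x} : Set N)) := by rw [hx]
        _ = Submodule.span R ({(x : M)} : Set M) := h2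
    rw [this]
    exact Submodule.fg_span_singleton _
  · exact bezout_cyclic hR hbez
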